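/- Let π_ref be a probability distribution on a countable set Y, R: Y → ℝ bounded, β > 0, and N a positive integer. Define iteratively π₀ = π_ref and π_{k+1}(y) = π_k(y)·exp(R(y)/β)/Z_k where Z_k normalizes. Then π_N(y) = π_ref(y)·exp(N·R(y)/β)/Z for the appropriate normalizer Z; i.e., N iterations of KL-regularized optimization with coefficient β yield the same policy as a single optimization with coefficient β/N. -/
import Mathlib


/-- `N` iterations of KL-regularized optimization with coefficient `β`, each time replacing
the reference policy by the previous optimum, yield the policy obtained from a single
optimization with coefficient `β/N`, i.e. `π_N(y) = π_ref(y) exp(N R(y)/β)/Z`. -/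
theorem stmt11 {Y : Type*} (p : PMF Y) (R : Y → ℝ) (hR : ∃ C, ∀ y, |R y| ≤ C)
    (β : ℝ) (hβ : 0 < β) (N : ℕ) (hN : 0 < N)
    (π : ℕ → Y → ℝ)
    (h0 : ∀ y, π 0 y = (p y).toReal)
    (hstep : ∀ k y, π (k + 1) y
      = π k y * Real.exp (R y / β) / ∑' y', π k y' * Real.exp (R y' / β)) :
    ∀ y, π N y
      = (p y).toReal * Real.exp ((N : ℝ) * R y / β)
          / ∑' y', (p y').toReal * Real.exp ((N : ℝ) * R y' / β) := by
  obtain ⟨C, hC⟩ := hR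
  set f : ℕ → Y → ℝ := fun k y => (p y).toReal * Real.exp ((k : ℝ) * R y / β) with hf
  have hpsum : Summable (fun y => (p y).toReal) := by
    apply ENNReal.summable_toReal
    rw [p.tsum_coe]; exact ENNReal.one_ne_top
  have hsum : ∀ k : ℕ, Summable (f k) := by
    intro k
    refine Summable.of_nonneg_of_le (fun y => by positivity) (fun y => ?_)
      (hpsum.mul_right (Real.exp ((k : ℝ) * C / β)))
    apply mul_le_mul_of_nonneg_left _ ENNReal.toReal_nonneg
    apply Real.exp_le_exp.2
    apply div_le_div_of_nonneg_right _ hβ.le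
    calc (k : ℝ) * R y ≤ |(k : ℝ) * R y| := le_abs_self _
      _ = (k : ℝ) * |R y| := by rw [abs_mul, Nat.abs_cast]
      _ ≤ (k : ℝ) * C := mul_le_mul_of_nonneg_left (hC y) (Nat.cast_nonneg k)
  have hZpos : ∀ k : ℕ, 0 < ∑' y, f k y := by
    intro k
    obtain ⟨y0, hy0⟩ : ∃ y, p y ≠ 0 := by
      by_contra h
      push_neg at h
      have := p.tsum_coe
      simp [h] at this
    refine Summable.tsum_pos (hsum k) (fun y => by positivity) y0 ?_
    have : 0 < (p y0).toReal :=
      ENNReal.toReal_pos hy0 (p.apply_ne_top y0)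
    positivity
  have hstepf : ∀ k y, f k y * Real.exp (R y / β) = f (k + 1) y := by
    intro k y
    simp only [hf]
    rw [mul_assoc, ← Real.exp_add]
    congr 2
    push_cast
    ring
  have key : ∀ k : ℕ, ∀ y, π k y = f k y / ∑' y', f k y' := by
    intro k
    induction k with
    | zero =>
      intro y
      have hZ0 : ∑' y', f 0 y' = 1 := by
        have : ∀ y', f 0 y' = (p y').toReal := by
          intro y'; simp [hf]
        rw [tsum_congr this]
        rw [← ENNReal.tsum_toReal_eq (fun a => p.apply_ne_top a), p.tsum_coe]
        simp
      rw [h0 y, hZ0]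
      simp [hf]
    | succ k ih =>
      intro y
      have hrw : ∀ y', π k y' * Real.exp (R y' / β)
          = f (k + 1) y' / (∑' z, f k z) := by
        intro y'
        rw [ih y', div_mul_eq_mul_div, hstepf]
      rw [hstep k y, tsum_congr hrw, tsum_div_const, hrw y]
      rw [div_div_div_eq, mul_comm (∑' z, f k z) (∑' x, f (k+1) x),
        mul_div_mul_right _ _ (hZpos k).ne']
  intro y
  exact key N y
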